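/- Let q = 2^h, h > p, p ≤ r ≤ m, and let A_{2^h}^p(k,r,m) = L_{2^h}(k,m) ∩ ZRM_{2^h}^p(r,m). For any fixed vector b ∈ R_{2^h}(k,m), the Class I code C = { b + a : a ∈ A_{2^h}^p(k,r,m) } satisfies: for any two distinct codewords u, v ∈ C, the Hamming distance between u and v is at least 2^{m-r} and the Lee distance between u and v is at least 2^{m-r+p}. -/

import Mathlib

open Finset

/-- The binary expansion of `i`, as a point of `ℤ₂^m`. -/
def bits (m : ℕ) (i : ℕ) : Fin m → ZMod 2 := fun j => if Nat.testBit i j.val then 1 else 0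

/-- Admissibility condition on ANF coefficients for `ZRM_{2^h}^p(r,m)`. -/
def zrmCond (h p r m : ℕ) (c : Finset (Fin m) → ZMod (2 ^ h)) : Prop :=
  ∀ S : Finset (Fin m),
    (r < S.card → c S = 0) ∧
    (r - p < S.card → S.card ≤ r →
      ∃ u : ZMod (2 ^ h), c S = 2 ^ (S.card - (r - p)) * u)

/-- The vector of length `2^m` associated with ANF coefficients `c`. -/
def anfVec (h m : ℕ) (c : Finset (Fin m) → ZMod (2 ^ h)) : Fin (2 ^ m) → ZMod (2 ^ h) :=
  fun i => ∑ S : Finset (Fin m), c S * ∏ α ∈ S, ((bits m i.val α).val : ZMod (2 ^ h))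

/-- The code `ZRM_{2^h}^p(r,m)`. -/
def ZRM (h p r m : ℕ) : Set (Fin (2 ^ m) → ZMod (2 ^ h)) :=
  {v | ∃ c : Finset (Fin m) → ZMod (2 ^ h), zrmCond h p r m c ∧ v = anfVec h m c}

/-- The linear code `L_{2^h}(k,m)`. -/
def LCode (h m k : ℕ) (iI : ℕ → Fin m) (jJ : Fin k → Fin m) :
    Set (Fin (2 ^ m) → ZMod (2 ^ h)) :=
  {v | ∃ (g : ℕ → (Fin k → ZMod 2) → ZMod (2 ^ h)) (g' : (Fin k → ZMod 2) → ZMod (2 ^ h)),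
    v = fun i =>
      (∑ α ∈ Finset.range (m - k),
          ((bits m i.val (iI α)).val : ZMod (2 ^ h)) * g α (fun b => bits m i.val (jJ b)))
        + g' (fun b => bits m i.val (jJ b))}

/-- The function `b` and the set `R_{2^h}(k,m)` of coset representatives. -/
def bFun (h m k : ℕ) (jJ : Fin k → Fin m) (π : (Fin k → ZMod 2) → ℕ → Fin m)
    (y : Fin m → ZMod 2) : ZMod (2 ^ h) :=
  ((2 ^ (h - 1) * ∑ d : Fin k → ZMod 2,
      (∑ α ∈ Finset.range (m - k - 1), (y (π d α)).val * (y (π d (α + 1))).val)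
        * ∏ b : Fin k, (y (jJ b)).val ^ (d b).val * (1 - (y (jJ b)).val) ^ (1 - (d b).val)
    : ℕ) : ZMod (2 ^ h))

def RCode (h m k : ℕ) (iI : ℕ → Fin m) (jJ : Fin k → Fin m) :
    Set (Fin (2 ^ m) → ZMod (2 ^ h)) :=
  {v | ∃ π : (Fin k → ZMod 2) → ℕ → Fin m,
    (∀ d, Set.InjOn (π d) (Set.Iio (m - k)) ∧
      (π d) '' Set.Iio (m - k) = iI '' Set.Iio (m - k)) ∧
    v = fun i => bFun h m k jJ π (bits m i.val)}

/-- Hamming distance. -/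
def distH {n q : ℕ} (u v : Fin n → ZMod q) : ℕ := (Finset.univ.filter fun i => u i ≠ v i).card

/-- Lee weight. -/
def wtL {n q : ℕ} (v : Fin n → ZMod q) : ℕ := ∑ i : Fin n, min (v i).val (q - (v i).val)



lemma zmod2_val_cast : ∀ a : ZMod 2, ((a.val : ℕ) : ZMod 2) = a := by decide

lemma zmod2_cases : ∀ a : ZMod 2, a = 0 ∨ a = 1 := by decide

lemma prod_ite_subset {m : ℕ} (A U : Finset (Fin m)) :
    (∏ α ∈ A, if α ∈ U then (1 : ZMod 2) else 0) = if A ⊆ U then 1 else 0 := by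
  by_cases hs : A ⊆ U
  · rw [if_pos hs, Finset.prod_eq_one]
    intro a ha; rw [if_pos (hs ha)]
  · rw [if_neg hs]
    obtain ⟨a, ha, hna⟩ := Finset.not_subset.mp hs
    exact Finset.prod_eq_zero ha (if_neg hna)

lemma card_filter_between {m : ℕ} (A S : Finset (Fin m)) (hAS : A ⊆ S) :
    ((S.powerset.filter fun U => A ⊆ U)).card = 2 ^ (S.card - A.card) := by
  rw [← Finset.card_sdiff_of_subset hAS, ← Finset.card_powerset]
  refine Finset.card_bij' (fun U _ => U \ A) (fun V _ => V ∪ A) ?_ ?_ ?_ ?_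
  · intro U hU
    simp only [Finset.mem_filter, Finset.mem_powerset] at hU
    simp only [Finset.mem_powerset]
    exact Finset.sdiff_subset_sdiff hU.1 (le_refl _)
  · intro V hV
    simp only [Finset.mem_powerset] at hV
    simp only [Finset.mem_filter, Finset.mem_powerset]
    constructor
    · exact Finset.union_subset (hV.trans (Finset.sdiff_subset)) hAS
    · exact Finset.subset_union_right
  · intro U hU
    simp only [Finset.mem_filter, Finset.mem_powerset] at hU
    exact Finset.sdiff_union_of_subset hU.2
  · intro V hV
    simp only [Finset.mem_powerset] at hV
    ext x
    simp only [Finset.mem_sdiff, Finset.mem_union]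
    constructor
    · rintro ⟨h1 | h1, h2⟩
      · exact h1
      · exact absurd h1 h2
    · intro hx
      exact ⟨Or.inl hx, (Finset.mem_sdiff.mp (hV hx)).2⟩

lemma sum_patch {m : ℕ} (c : Finset (Fin m) → ZMod 2) (S₀ : Finset (Fin m))
    (hmax : ∀ T, S₀ ⊆ T → T ≠ S₀ → c T = 0)
    (y : Fin m → ZMod 2) (hy : ∀ α ∈ S₀, y α = 0) :
    ∑ U ∈ S₀.powerset, ∑ T : Finset (Fin m),
        c T * ∏ α ∈ T, (if α ∈ U then (1 : ZMod 2) else y α) = c S₀ := by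
  have step : ∀ U ∈ S₀.powerset, ∀ T : Finset (Fin m),
      (∏ α ∈ T, (if α ∈ U then (1:ZMod 2) else y α))
        = (if T ∩ S₀ ⊆ U then 1 else 0) * ∏ α ∈ T \ S₀, y α := by
    intro U hU T
    rw [Finset.mem_powerset] at hU
    rw [← Finset.prod_inter_mul_prod_diff T S₀]
    congr 1
    · rw [← prod_ite_subset (T ∩ S₀) U]
      apply Finset.prod_congr rfl
      intro a ha
      have haS := (Finset.mem_inter.mp ha).2
      by_cases hmem : a ∈ U
      · simp [hmem]
      · simp [hmem, hy a haS]
    · apply Finset.prod_congr rfl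
      intro a ha
      have : a ∉ U := fun hc => (Finset.mem_sdiff.mp ha).2 (hU hc)
      rw [if_neg this]
  calc ∑ U ∈ S₀.powerset, ∑ T : Finset (Fin m),
        c T * ∏ α ∈ T, (if α ∈ U then (1 : ZMod 2) else y α)
      = ∑ T : Finset (Fin m), (c T * ∏ α ∈ T \ S₀, y α) *
          (((S₀.powerset.filter fun U => T ∩ S₀ ⊆ U).card : ℕ) : ZMod 2) := by
        rw [Finset.sum_comm]
        apply Finset.sum_congr rfl
        intro T _
        rw [← Finset.sum_boole, Finset.mul_sum]
        apply Finset.sum_congr rfl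
        intro U hU
        rw [step U hU T]
        ring
    _ = c S₀ := by
        rw [Finset.sum_eq_single S₀]
        · rw [card_filter_between _ _ (Finset.inter_subset_right),
            Finset.inter_self, Finset.sdiff_self, Nat.sub_self, pow_zero,
            Finset.prod_empty, mul_one, Nat.cast_one, mul_one]
        · intro T _ hT
          by_cases hsub : S₀ ⊆ T
          · rw [hmax T hsub hT, zero_mul, zero_mul]
          · rw [card_filter_between _ _ (Finset.inter_subset_right)]
            have hlt : (T ∩ S₀).card < S₀.card := by
              apply Finset.card_lt_card
              rw [Finset.ssubset_iff_subset_ne]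
              refine ⟨Finset.inter_subset_right, ?_⟩
              intro hEq
              exact hsub (Finset.inter_eq_right.mp hEq)
            have : ((2 ^ (S₀.card - (T ∩ S₀).card) : ℕ) : ZMod 2) = 0 := by
              rw [ZMod.natCast_eq_zero_iff]
              exact dvd_pow_self 2 (by omega)
            rw [this, mul_zero]
        · intro hS₀
          exact absurd (Finset.mem_univ S₀) hS₀

lemma rm_bound {m d : ℕ} (c : Finset (Fin m) → ZMod 2) (S₁ : Finset (Fin m))
    (hc1 : c S₁ ≠ 0) (hd : ∀ S, c S ≠ 0 → S.card ≤ d) :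
    2 ^ (m - d) ≤ (Finset.univ.filter
      (fun x : Fin m → ZMod 2 => (∑ S : Finset (Fin m), c S * ∏ α ∈ S, x α) ≠ 0)).card := by
  classical
  obtain ⟨S₀, hS₀mem, hS₀max⟩ := Finset.exists_maximal
    (s := Finset.univ.filter fun S => c S ≠ 0) ⟨S₁, by simp [hc1]⟩
  simp only [Finset.mem_filter] at hS₀mem
  have hc₀ : c S₀ ≠ 0 := hS₀mem.2
  have hmax : ∀ T, S₀ ⊆ T → T ≠ S₀ → c T = 0 := by
    intro T hsub hne
    by_contra hT
    exact hne (le_antisymm (hS₀max (by simp [hT]) hsub) hsub)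
  have key : ∀ y : Fin m → ZMod 2, (∀ α ∈ S₀, y α = 0) →
      ∃ x : Fin m → ZMod 2, (∀ α, α ∉ S₀ → x α = y α) ∧
        (∑ S : Finset (Fin m), c S * ∏ α ∈ S, x α) ≠ 0 := by
    intro y hy
    by_contra hcon
    push_neg at hcon
    apply hc₀
    rw [← sum_patch c S₀ hmax y hy]
    apply Finset.sum_eq_zero
    intro U hU
    apply hcon (fun α => if α ∈ U then (1 : ZMod 2) else y α)
    intro α hα
    have : α ∉ U := fun hmem => hα (Finset.mem_powerset.mp hU hmem)
    simp [this]
  choose! xfun hxfun1 hxfun2 using key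
  set Y := Finset.univ.filter (fun y : Fin m → ZMod 2 => ∀ α ∈ S₀, y α = 0) with hY
  have hYcard : Y.card = 2 ^ (m - S₀.card) := by
    have hpc : (S₀ᶜ.powerset).card = 2 ^ (m - S₀.card) := by
      rw [Finset.card_powerset, Finset.card_compl, Fintype.card_fin]
    rw [← hpc]
    refine Finset.card_bij' (fun y _ => Finset.univ.filter fun α => y α = 1)
      (fun V _ => fun α => if α ∈ V then 1 else 0) ?_ ?_ ?_ ?_
    · intro y hy
      simp only [hY, Finset.mem_filter, Finset.mem_univ, true_and] at hy
      simp only [Finset.mem_powerset]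
      intro α hα
      simp only [Finset.mem_filter, Finset.mem_univ, true_and] at hα
      rw [Finset.mem_compl]
      intro hS
      rw [hy α hS] at hα
      exact (by decide : (0:ZMod 2) ≠ 1) hα
    · intro V hV
      simp only [Finset.mem_powerset] at hV
      simp only [hY, Finset.mem_filter, Finset.mem_univ, true_and]
      intro α hα
      rw [if_neg]
      intro hαV
      exact (Finset.mem_compl.mp (hV hαV)) hα
    · intro y hy
      funext α
      show (if α ∈ Finset.univ.filter (fun β => y β = 1) then (1:ZMod 2) else 0) = y α
      rcases zmod2_cases (y α) with h0 | h1
      · rw [if_neg, h0]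
        simp only [Finset.mem_filter, Finset.mem_univ, true_and]
        rw [h0]; decide
      · rw [if_pos, h1]
        simp only [Finset.mem_filter, Finset.mem_univ, true_and]
        exact h1
    · intro V hV
      show Finset.univ.filter (fun α => (if α ∈ V then (1:ZMod 2) else 0) = 1) = V
      ext α
      simp only [Finset.mem_filter, Finset.mem_univ, true_and]
      by_cases hmem : α ∈ V
      · simp [hmem]
      · simp only [if_neg hmem]
        constructor
        · intro h01; exact absurd h01 (by decide)
        · intro h; exact absurd h hmem
  have hle : Y.card ≤ (Finset.univ.filter
      (fun x : Fin m → ZMod 2 => (∑ S : Finset (Fin m), c S * ∏ α ∈ S, x α) ≠ 0)).card := by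
    apply Finset.card_le_card_of_injOn xfun
    · intro y hy
      simp only [hY, Finset.coe_filter, Finset.mem_filter, Finset.mem_univ, true_and, Set.mem_setOf_eq] at hy
      simp only [Finset.coe_filter, Finset.mem_filter, Finset.mem_univ, true_and, Set.mem_setOf_eq]
      exact hxfun2 y hy
    · intro y₁ h₁ y₂ h₂ heq
      simp only [hY, Finset.coe_filter, Finset.mem_univ, true_and, Set.mem_setOf_eq] at h₁ h₂
      funext α
      by_cases hα : α ∈ S₀
      · rw [h₁ α hα, h₂ α hα]
      · rw [← hxfun1 y₁ h₁ α hα, ← hxfun1 y₂ h₂ α hα, heq]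
  calc 2 ^ (m - d) ≤ 2 ^ (m - S₀.card) :=
        Nat.pow_le_pow_right (by norm_num) (Nat.sub_le_sub_left (hd S₀ hc₀) m)
    _ = Y.card := hYcard.symm
    _ ≤ _ := hle

lemma bits_bijective (m : ℕ) : Function.Bijective (fun i : Fin (2^m) => bits m i.val) := by
  rw [Fintype.bijective_iff_injective_and_card]
  constructor
  · intro i₁ i₂ hij
    apply Fin.ext
    apply Nat.eq_of_testBit_eq
    intro j
    by_cases hj : j < m
    · have := congrFun hij ⟨j, hj⟩
      simp only [bits] at this
      by_cases h1 : i₁.val.testBit j <;> by_cases h2 : i₂.val.testBit j <;>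
        simp_all
    · push_neg at hj
      rw [Nat.testBit_lt_two_pow (lt_of_lt_of_le i₁.isLt (Nat.pow_le_pow_right (by norm_num) hj)),
        Nat.testBit_lt_two_pow (lt_of_lt_of_le i₂.isLt (Nat.pow_le_pow_right (by norm_num) hj))]
  · simp [Fintype.card_fun, ZMod.card]

lemma card_transfer {m : ℕ} (P : (Fin m → ZMod 2) → Prop) [DecidablePred P] :
    (Finset.univ.filter fun i : Fin (2^m) => P (bits m i.val)).card
      = (Finset.univ.filter P).card := by
  apply Finset.card_bij (fun i _ => bits m i.val)
  · intro a ha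
    simp only [Finset.mem_filter, Finset.mem_univ, true_and] at ha ⊢
    exact ha
  · intro a _ b _ hab
    exact (bits_bijective m).1 hab
  · intro x hx
    obtain ⟨i, hi⟩ := (bits_bijective m).2 x
    refine ⟨i, ?_, hi⟩
    simp only [Finset.mem_filter, Finset.mem_univ, true_and] at hx ⊢
    rw [show bits m i.val = x from hi]
    exact hx


lemma arith_aux (p r m jj mn : ℕ) (hpr : p ≤ r) (hrm : r ≤ m) (h1 : mn ≤ p) (h2 : mn ≤ jj) :
    m - r + p ≤ jj + (m - (r - p + mn)) := by omega

lemma core (h p r m : ℕ) (hph : p < h) (hpr : p ≤ r) (hrm : r ≤ m)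
    (e : Finset (Fin m) → ZMod (2 ^ h)) (he : zrmCond h p r m e)
    (hne : ∃ S, e S ≠ 0) :
    2 ^ (m - r) ≤ (Finset.univ.filter fun i : Fin (2 ^ m) => anfVec h m e i ≠ 0).card ∧
    2 ^ (m - r + p) ≤ wtL (anfVec h m e) := by
  classical
  haveI : NeZero (2 ^ h) := ⟨by positivity⟩
  have h1 : 1 ≤ h := lt_of_le_of_lt (Nat.zero_le p) hph
  have hex : ∃ j, ∃ S, ¬ (2 ^ (j + 1) ∣ (e S).val) := by
    obtain ⟨S, hS⟩ := hne
    refine ⟨h - 1, S, ?_⟩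
    rw [Nat.sub_add_cancel h1]
    intro hdvd
    have hlt := ZMod.val_lt (e S)
    have h0 : (e S).val = 0 := Nat.eq_zero_of_dvd_of_lt hdvd hlt
    exact hS ((ZMod.val_eq_zero _).mp h0)
  set j := Nat.find hex with hjdef
  obtain ⟨S₀, hS₀⟩ : ∃ S, ¬ 2 ^ (j + 1) ∣ (e S).val := Nat.find_spec hex
  have hjh : j < h := by
    have hle : j ≤ h - 1 := Nat.find_le (by
      obtain ⟨S, hS⟩ := hne
      refine ⟨S, ?_⟩
      rw [Nat.sub_add_cancel h1]
      intro hdvd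
      exact hS ((ZMod.val_eq_zero _).mp (Nat.eq_zero_of_dvd_of_lt hdvd (ZMod.val_lt (e S)))))
    omega
  have hmin : ∀ S, 2 ^ j ∣ (e S).val := by
    intro S
    rcases Nat.eq_zero_or_pos j with hj | hj
    · simp [hj]
    · have hm := Nat.find_min hex (show j - 1 < j by omega)
      push_neg at hm
      have := hm S
      rwa [Nat.sub_add_cancel hj] at this
  set e' : Finset (Fin m) → ZMod (2 ^ h) := fun S => (((e S).val / 2 ^ j : ℕ) : ZMod (2 ^ h))
    with he'def
  set c₂ : Finset (Fin m) → ZMod 2 := fun S => (((e S).val / 2 ^ j : ℕ) : ZMod 2) with hc₂def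
  have heq : ∀ S, e S = 2 ^ j * e' S := by
    intro S
    have key : ((2 ^ j * ((e S).val / 2 ^ j) : ℕ) : ZMod (2 ^ h)) = e S := by
      rw [Nat.mul_div_cancel' (hmin S), ZMod.natCast_val, ZMod.cast_id]
    rw [← key]
    push_cast
    ring
  have hc₂iff : ∀ S, c₂ S ≠ 0 ↔ ¬ 2 ^ (j + 1) ∣ (e S).val := by
    intro S
    rw [hc₂def]
    simp only [ne_eq]
    rw [ZMod.natCast_eq_zero_iff, Nat.dvd_div_iff_mul_dvd (hmin S), ← pow_succ]
  have hc₂r : ∀ S, c₂ S ≠ 0 → S.card ≤ r := by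
    intro S hS
    by_contra hcard
    push_neg at hcard
    have hz := (he S).1 hcard
    apply (hc₂iff S).mp hS
    rw [hz]
    simp
  have hc₂d : ∀ S, c₂ S ≠ 0 → S.card ≤ r - p + min p j := by
    intro S hS
    by_cases hsmall : S.card ≤ r - p
    · omega
    push_neg at hsmall
    have hSr := hc₂r S hS
    obtain ⟨uu, huu⟩ := (he S).2 hsmall hSr
    have htj : S.card - (r - p) ≤ j := by
      by_contra hcon
      push_neg at hcon
      apply (hc₂iff S).mp hS
      have hcast : e S = ((2 ^ (S.card - (r - p)) * uu.val : ℕ) : ZMod (2 ^ h)) := by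
        rw [huu]
        push_cast
        rw [ZMod.natCast_val, ZMod.cast_id]
      rw [hcast, ZMod.val_natCast]
      rw [Nat.dvd_mod_iff (pow_dvd_pow 2 (by omega : j + 1 ≤ h))]
      exact Dvd.dvd.mul_right (pow_dvd_pow 2 (by omega)) _
    omega
  have hpt : ∀ i : Fin (2 ^ m),
      (∑ S : Finset (Fin m), c₂ S * ∏ α ∈ S, bits m i.val α) ≠ 0 →
      anfVec h m e i ≠ 0 ∧
        2 ^ j ≤ min (anfVec h m e i).val (2 ^ h - (anfVec h m e i).val) := by
    intro i hPi
    set W := anfVec h m e' i with hW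
    have hcast : ((W.val : ℕ) : ZMod 2)
        = ∑ S : Finset (Fin m), c₂ S * ∏ α ∈ S, bits m i.val α := by
      have h2 : (2 : ℕ) ∣ 2 ^ h := dvd_pow_self 2 (by omega)
      let ψ : ZMod (2 ^ h) →+* ZMod 2 := ZMod.castHom h2 (ZMod 2)
      have hψ : ∀ a : ZMod (2 ^ h), ψ a = ((a.val : ℕ) : ZMod 2) := by
        intro a
        rw [ZMod.castHom_apply, ← ZMod.natCast_val]
      rw [← hψ W, hW]
      rw [anfVec, map_sum]
      apply Finset.sum_congr rfl
      intro S _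
      rw [map_mul, map_prod]
      congr 1
      · rw [he'def]
        exact map_natCast ψ _
      · apply Finset.prod_congr rfl
        intro α _
        rw [map_natCast ψ, zmod2_val_cast]
    have hodd : ¬ 2 ∣ W.val := by
      intro h2
      apply hPi
      rw [← hcast]
      exact (ZMod.natCast_eq_zero_iff _ _).mpr h2
    have hlin : anfVec h m e i = 2 ^ j * W := by
      rw [hW, anfVec, anfVec, Finset.mul_sum]
      apply Finset.sum_congr rfl
      intro S _
      rw [heq S]
      ring
    have hnat : anfVec h m e i = ((2 ^ j * W.val : ℕ) : ZMod (2 ^ h)) := by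
      rw [hlin]
      push_cast
      rw [ZMod.natCast_val, ZMod.cast_id]
    have hv : (anfVec h m e i).val = (2 ^ j * W.val) % 2 ^ h := by
      rw [hnat, ZMod.val_natCast]
    have hdvd_v : 2 ^ j ∣ (anfVec h m e i).val := by
      rw [hv, Nat.dvd_mod_iff (pow_dvd_pow 2 hjh.le)]
      exact Dvd.dvd.mul_right dvd_rfl _
    have hvne : (anfVec h m e i).val ≠ 0 := by
      intro h0
      rw [hv] at h0
      have hdd : 2 ^ h ∣ 2 ^ j * W.val := Nat.dvd_of_mod_eq_zero h0
      have h2 : 2 ^ j * 2 ^ (h - j) ∣ 2 ^ j * W.val := by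
        rw [← pow_add]
        have : j + (h - j) = h := by omega
        rw [this]
        exact hdd
      have h3 : 2 ^ (h - j) ∣ W.val :=
        (Nat.mul_dvd_mul_iff_left (pow_pos (by norm_num : (0:ℕ) < 2) j)).mp h2
      exact hodd (dvd_trans (dvd_pow_self 2 (by omega : h - j ≠ 0)) h3)
    have hvlt : (anfVec h m e i).val < 2 ^ h := ZMod.val_lt _
    refine ⟨?_, le_min ?_ ?_⟩
    · intro h0
      apply hvne
      rw [h0, ZMod.val_zero]
    · exact Nat.le_of_dvd (Nat.pos_of_ne_zero hvne) hdvd_v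
    · exact Nat.le_of_dvd (by omega)
        (Nat.dvd_sub (pow_dvd_pow 2 hjh.le) hdvd_v)
  have hc₂S₀ : c₂ S₀ ≠ 0 := (hc₂iff S₀).mpr hS₀
  have hcount := card_transfer
    (fun x : Fin m → ZMod 2 => (∑ S : Finset (Fin m), c₂ S * ∏ α ∈ S, x α) ≠ 0)
  have hrmr := rm_bound c₂ S₀ hc₂S₀ hc₂r
  have hrmd := rm_bound c₂ S₀ hc₂S₀ hc₂d
  constructor
  · calc 2 ^ (m - r)
        ≤ (Finset.univ.filter
            (fun x : Fin m → ZMod 2 =>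
              (∑ S : Finset (Fin m), c₂ S * ∏ α ∈ S, x α) ≠ 0)).card := hrmr
      _ = (Finset.univ.filter fun i : Fin (2 ^ m) =>
            (∑ S : Finset (Fin m), c₂ S * ∏ α ∈ S, bits m i.val α) ≠ 0).card := hcount.symm
      _ ≤ (Finset.univ.filter fun i : Fin (2 ^ m) => anfVec h m e i ≠ 0).card := by
          apply Finset.card_le_card
          intro i hi
          simp only [Finset.mem_filter, Finset.mem_univ, true_and] at hi ⊢
          exact (hpt i hi).1
  · have hstep : 2 ^ j * 2 ^ (m - (r - p + min p j)) ≤ wtL (anfVec h m e) := by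
      calc 2 ^ j * 2 ^ (m - (r - p + min p j))
          ≤ 2 ^ j * (Finset.univ.filter
              (fun x : Fin m → ZMod 2 =>
                (∑ S : Finset (Fin m), c₂ S * ∏ α ∈ S, x α) ≠ 0)).card :=
            Nat.mul_le_mul_left _ hrmd
        _ = ∑ _i ∈ (Finset.univ.filter fun i : Fin (2 ^ m) =>
              (∑ S : Finset (Fin m), c₂ S * ∏ α ∈ S, bits m i.val α) ≠ 0), 2 ^ j := by
            rw [Finset.sum_const, hcount, smul_eq_mul, mul_comm]
        _ ≤ ∑ i ∈ (Finset.univ.filter fun i : Fin (2 ^ m) =>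
              (∑ S : Finset (Fin m), c₂ S * ∏ α ∈ S, bits m i.val α) ≠ 0),
              min (anfVec h m e i).val (2 ^ h - (anfVec h m e i).val) := by
            apply Finset.sum_le_sum
            intro i hi
            simp only [Finset.mem_filter, Finset.mem_univ, true_and] at hi
            exact (hpt i hi).2
        _ ≤ ∑ i : Fin (2 ^ m),
              min (anfVec h m e i).val (2 ^ h - (anfVec h m e i).val) :=
            Finset.sum_le_sum_of_subset (Finset.filter_subset _ _)
        _ = wtL (anfVec h m e) := rfl
    refine le_trans ?_ hstep
    rw [← pow_add]
    apply Nat.pow_le_pow_right (by norm_num)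
    exact arith_aux p r m j (min p j) hpr hrm (min_le_left _ _) (min_le_right _ _)

/-- Class I codes: a single coset `b + A_{2^h}^p(k,r,m)` has minimum Hamming distance at
least `2^{m-r}` and minimum Lee distance at least `2^{m-r+p}`. -/
theorem stmt_14 (h p r m k : ℕ) (hph : p < h) (hpr : p ≤ r) (hrm : r ≤ m) (hkm : k ≤ m)
    (iI : ℕ → Fin m) (jJ : Fin k → Fin m)
    (hiInj : Set.InjOn iI (Set.Iio (m - k))) (hjInj : Function.Injective jJ)
    (hdisj : ∀ a < m - k, ∀ b : Fin k, iI a ≠ jJ b)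
    (hcover : ∀ v : Fin m, (∃ a < m - k, iI a = v) ∨ ∃ b : Fin k, jJ b = v)
    (b : Fin (2 ^ m) → ZMod (2 ^ h)) (hb : b ∈ RCode h m k iI jJ)
    (u v : Fin (2 ^ m) → ZMod (2 ^ h))
    (hu : ∃ a ∈ LCode h m k iI jJ ∩ ZRM h p r m, u = b + a)
    (hv : ∃ a ∈ LCode h m k iI jJ ∩ ZRM h p r m, v = b + a)
    (huv : u ≠ v) :
    2 ^ (m - r) ≤ distH u v ∧ 2 ^ (m - r + p) ≤ wtL (u - v) := by
  classical
  obtain ⟨a, ⟨-, ca, hca, rfl⟩, rfl⟩ := hu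
  obtain ⟨a', ⟨-, cb, hcb, rfl⟩, rfl⟩ := hv
  set e : Finset (Fin m) → ZMod (2 ^ h) := fun S => ca S - cb S with hedef
  have hze : zrmCond h p r m e := by
    intro S
    obtain ⟨h1a, h2a⟩ := hca S
    obtain ⟨h1b, h2b⟩ := hcb S
    constructor
    · intro hr
      rw [hedef]
      simp only []
      rw [h1a hr, h1b hr, sub_self]
    · intro hlo hhi
      obtain ⟨u1, hu1⟩ := h2a hlo hhi
      obtain ⟨u2, hu2⟩ := h2b hlo hhi
      refine ⟨u1 - u2, ?_⟩
      rw [hedef]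
      simp only []
      rw [hu1, hu2]
      ring
  have hw : ∀ i, (b + anfVec h m ca) i - (b + anfVec h m cb) i = anfVec h m e i := by
    intro i
    simp only [Pi.add_apply, anfVec]
    have hstep : b i + (∑ S : Finset (Fin m), ca S * ∏ α ∈ S, ((bits m i.val α).val : ZMod (2 ^ h)))
        - (b i + ∑ S : Finset (Fin m), cb S * ∏ α ∈ S, ((bits m i.val α).val : ZMod (2 ^ h)))
        = (∑ S : Finset (Fin m), ca S * ∏ α ∈ S, ((bits m i.val α).val : ZMod (2 ^ h)))
          - ∑ S : Finset (Fin m), cb S * ∏ α ∈ S, ((bits m i.val α).val : ZMod (2 ^ h)) := by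
      ring
    rw [hstep, ← Finset.sum_sub_distrib]
    exact Finset.sum_congr rfl fun S _ => (sub_mul _ _ _).symm
  have hne : ∃ S, e S ≠ 0 := by
    by_contra hc
    push_neg at hc
    apply huv
    have hab : anfVec h m ca = anfVec h m cb := by
      funext i
      rw [anfVec, anfVec]
      apply Finset.sum_congr rfl
      intro S _
      have := hc S
      rw [hedef] at this
      simp only [] at this
      rw [sub_eq_zero.mp this]
    rw [hab]
  obtain ⟨hH, hL⟩ := core h p r m hph hpr hrm e hze hne
  constructor
  · rw [distH]
    refine le_trans hH (Finset.card_le_card ?_)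
    intro i hi
    simp only [Finset.mem_filter, Finset.mem_univ, true_and] at hi ⊢
    intro hEq
    apply hi
    rw [← hw i, hEq, sub_self]
  · have huvw : (b + anfVec h m ca) - (b + anfVec h m cb) = anfVec h m e :=
      funext fun i => hw i
    rw [huvw]
    exact hL
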